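/- Let L ≥ 2 be an integer and let θ ∈ ℝⁿ be nonconstant. (i) If L(θ) ≥ 2L, then for all integers 1 ≤ k, ℓ ≤ L one has Σ_{i=1}^n (θ_i − θ_{i+k+ℓ})² = (k+ℓ)·W(θ), so that G(θ)_{kℓ} = |k−ℓ| + k + ℓ = 2·max{k, ℓ}; in particular, for such θ the quadratic form c ↦ c^⊤(I_L − (W(θ)/(nσ²))·G(θ))c depends on (θ, σ²) only through the ratio W(θ)/(nσ²). (ii) For any θ with L(θ) ≥ L and any σ > 0, the function c ↦ κ₄ − 1 + c^⊤(I_L − (W(θ)/(nσ²))·G(θ))c attains a unique minimizer over the affine set {c ∈ ℝ^L : Σ_{k=1}^L c_k = 1, Σ_{k=1}^L k·c_k = 0}. -/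

import Mathlib

open Finset

/-- The minimal length of a maximal set of cyclically consecutive indices on which the
`n`-periodic sequence `θ` is constant (equal to `n` when `θ` is constant). -/
noncomputable def cycMinSeg (n : ℕ) (θ : ℤ → ℝ) : ℕ :=
  sInf ({n} ∪ {d : ℕ | 0 < d ∧ ∃ i : ℤ,
    θ i ≠ θ (i + 1) ∧ θ (i + d) ≠ θ (i + d + 1) ∧
    ∀ e : ℕ, 0 < e → e < d → θ (i + e) = θ (i + e + 1)})

/-- `W(θ) = ∑_{i=1}^n (θ_i - θ_{i+1})²`. -/
def Wtv (n : ℕ) (θ : ℤ → ℝ) : ℝ :=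
  ∑ i ∈ Finset.range n, (θ (i + 1) - θ (i + 2)) ^ 2

/-- `G(θ)_{kℓ} = |k-ℓ| + (1/W(θ)) ∑_{i=1}^n (θ_i - θ_{i+k+ℓ})²`. -/
noncomputable def Gmat (n : ℕ) (θ : ℤ → ℝ) (k l : ℕ) : ℝ :=
  |(k : ℝ) - (l : ℝ)| +
    1 / Wtv n θ * ∑ i ∈ Finset.range n, (θ (i + 1) - θ (i + 1 + k + l)) ^ 2

/-- The quadratic form `c ↦ cᵀ (I_L - (W(θ)/(nσ²)) G(θ)) c` (with `1`-based lags). -/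
noncomputable def quadForm (n L : ℕ) (θ : ℤ → ℝ) (σ : ℝ) (c : Fin L → ℝ) : ℝ :=
  ∑ k : Fin L, ∑ l : Fin L, c k * c l *
    ((if k = l then (1 : ℝ) else 0)
      - Wtv n θ / (n * σ ^ 2) * Gmat n θ ((k : ℕ) + 1) ((l : ℕ) + 1))

section prelim
variable (n : ℕ) (θ : ℤ → ℝ)

/-- shift a cyclic sum by one -/
lemma shift_sum_one (f : ℤ → ℝ) (hf : ∀ i : ℤ, f (i + n) = f i) :
    ∑ i ∈ range n, f ((i : ℤ) + 1) = ∑ i ∈ range n, f (i : ℤ) := by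
  have h1 : ∑ i ∈ range (n+1), f (i : ℤ)
      = ∑ i ∈ range n, f ((i : ℤ) + 1) + f ((0:ℕ) : ℤ) := by
    rw [Finset.sum_range_succ']
    push_cast
    rw [add_comm]
  have h2 : ∑ i ∈ range (n+1), f (i : ℤ) = ∑ i ∈ range n, f (i : ℤ) + f (n : ℤ) := by
    rw [Finset.sum_range_succ]
  have h3 : f ((n:ℤ)) = f 0 := by
    have := hf 0; simpa using this
  push_cast at h1
  linarith [h1, h2, h3]

lemma shift_sum (f : ℤ → ℝ) (hf : ∀ i : ℤ, f (i + n) = f i) (c : ℤ) :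
    ∑ i ∈ range n, f ((i : ℤ) + c) = ∑ i ∈ range n, f (i : ℤ) := by
  induction c using Int.induction_on with
  | zero => simp
  | succ k ih =>
      have := shift_sum_one n (fun j => f (j + k)) (fun i => by
        have := hf (i + k); simpa [add_right_comm] using this)
      calc ∑ i ∈ range n, f ((i:ℤ) + (k+1)) = ∑ i ∈ range n, f (((i:ℤ) + 1) + k) := by
            apply Finset.sum_congr rfl; intro i _; ring_nf
        _ = ∑ i ∈ range n, f ((i:ℤ) + k) := this
        _ = ∑ i ∈ range n, f (i:ℤ) := ih
  | pred k ih =>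
      have step := shift_sum_one n (fun j => f (j + (-(k:ℤ) - 1))) (fun i => by
        have := hf (i + (-(k:ℤ) -1)); simpa [add_right_comm] using this)
      calc ∑ i ∈ range n, f ((i:ℤ) + (-(k:ℤ) - 1))
          = ∑ i ∈ range n, f (((i:ℤ) + 1) + (-(k:ℤ) - 1)) := step.symm
        _ = ∑ i ∈ range n, f ((i:ℤ) + -(k:ℤ)) := by
            apply Finset.sum_congr rfl; intro i _; ring_nf
        _ = ∑ i ∈ range n, f (i:ℤ) := ih


lemma cycMinSeg_le_of_two_jumps :
    ∀ t : ℕ, 0 < t → ∀ i : ℤ, θ i ≠ θ (i + 1) → θ (i + t) ≠ θ (i + t + 1) →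
      cycMinSeg n θ ≤ t := by
  intro t
  induction t using Nat.strong_induction_on with
  | _ t ih =>
    intro ht i h1 h2
    by_cases hmid : ∃ e : ℕ, 0 < e ∧ e < t ∧ θ (i + e) ≠ θ (i + e + 1)
    · obtain ⟨e, he0, het, hje⟩ := hmid
      exact (ih e het he0 i h1 hje).trans het.le
    · push_neg at hmid
      apply Nat.sInf_le
      right
      exact ⟨ht, i, h1, h2, fun e he0 het => hmid e he0 het⟩

lemma no_jump_near (t : ℕ) (ht : 0 < t) (htK : t < cycMinSeg n θ)
    (i : ℤ) (h1 : θ i ≠ θ (i + 1)) : θ (i + t) = θ (i + t + 1) := by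
  by_contra h2
  exact absurd (cycMinSeg_le_of_two_jumps n θ t ht i h1 h2) (by omega)

lemma const_run (i : ℤ) (h1 : θ i ≠ θ (i + 1)) :
    ∀ m : ℕ, m < cycMinSeg n θ → θ (i + 1 + m) = θ (i + 1) := by
  intro m
  induction m with
  | zero => simp
  | succ m ihm =>
    intro hm
    have h3 : θ (i + (m+1 : ℕ)) = θ (i + (m+1 : ℕ) + 1) :=
      no_jump_near n θ (m+1) (Nat.succ_pos m) hm i h1
    have h4 : θ (i + 1 + ((m+1 : ℕ) : ℤ)) = θ (i + ((m+1:ℕ) : ℤ) + 1) := by ring_nf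
    rw [h4, ← h3]
    have : θ (i + ((m+1:ℕ):ℤ)) = θ (i + 1 + (m:ℕ)) := by push_cast; ring_nf
    rw [this]
    exact ihm (by omega)

/-- two jumps cannot be at distance `0 < t < cycMinSeg`; product form -/
lemma dd_mul_dd (t : ℕ) (ht : 0 < t) (htK : t < cycMinSeg n θ) (i : ℤ) :
    (θ i - θ (i + 1)) * (θ (i + t) - θ (i + t + 1)) = 0 := by
  by_cases h1 : θ i = θ (i + 1)
  · rw [h1]; ring
  · rw [no_jump_near n θ t ht htK i h1]; ring


lemma theta_shift_mul (hp : ∀ i : ℤ, θ (i + n) = θ i) :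
    ∀ q : ℤ, ∀ x : ℤ, θ (x + n * q) = θ x := by
  intro q
  induction q using Int.induction_on with
  | zero => simp
  | succ k ih =>
      intro x
      have : (x + n * ((k:ℤ)+1)) = (x + n * k) + n := by ring
      rw [this, hp, ih]
  | pred k ih =>
      intro x
      have : (x + n * (-(k:ℤ) - 1)) + n = x + n * (-(k:ℤ)) := by ring
      rw [← ih x, ← this, hp]

lemma exists_jump (hnc : ∃ i j : ℤ, θ i ≠ θ j) : ∃ i : ℤ, θ i ≠ θ (i + 1) := by
  by_contra h
  push_neg at h
  obtain ⟨i, j, hij⟩ := hnc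
  have hconst : ∀ k : ℤ, θ k = θ 0 := by
    intro k
    induction k using Int.induction_on with
    | zero => rfl
    | succ m ihm => rw [← h m]; exact ihm
    | pred m ihm => rw [h (-(m:ℤ) - 1)]; simpa using ihm
  exact hij ((hconst i).trans (hconst j).symm)

lemma Wtv_pos (hn : 0 < n) (hp : ∀ i : ℤ, θ (i + n) = θ i)
    (hnc : ∃ i j : ℤ, θ i ≠ θ j) : 0 < Wtv n θ := by
  obtain ⟨j, hj⟩ := exists_jump θ hnc
  set q : ℤ := (j - 1) / n with hq
  set r : ℤ := (j - 1) % n with hr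
  have hr0 : 0 ≤ r := Int.emod_nonneg _ (by positivity)
  have hrn : r < n := Int.emod_lt_of_pos _ (by exact_mod_cast hn)
  have hjr : j = r + 1 + n * q := by
    have h := Int.mul_ediv_add_emod (j - 1) n
    rw [← hq, ← hr] at h
    linarith
  have h1 : θ (r + 1) = θ j := by
    rw [hjr]
    have : (r + 1 + (n:ℤ) * q) = (r + 1) + n * q := by ring
    rw [this, theta_shift_mul n θ hp]
  have h2 : θ (r + 2) = θ (j + 1) := by
    rw [hjr]
    have : (r + 1 + (n:ℤ) * q + 1) = (r + 2) + n * q := by ring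
    rw [this, theta_shift_mul n θ hp]
  have hterm : (0:ℝ) < (θ ((r.toNat : ℤ) + 1) - θ ((r.toNat : ℤ) + 2)) ^ 2 := by
    have : ((r.toNat : ℤ)) = r := Int.toNat_of_nonneg hr0
    rw [this, h1, h2]
    have : θ j - θ (j + 1) ≠ 0 := sub_ne_zero_of_ne hj
    positivity
  have hmem : r.toNat ∈ range n := by
    rw [Finset.mem_range]; omega
  have hle : (θ ((r.toNat:ℤ) + 1) - θ ((r.toNat:ℤ) + 2)) ^ 2 ≤ Wtv n θ := by
    apply Finset.single_le_sum (f := fun i : ℕ => (θ ((i:ℤ) + 1) - θ ((i:ℤ) + 2)) ^ 2)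
      (fun i _ => by positivity) hmem
  linarith

lemma Ssum_eq (hp : ∀ i : ℤ, θ (i + n) = θ i) :
    ∀ m : ℕ, m ≤ cycMinSeg n θ →
      ∑ i ∈ range n, (θ ((i:ℤ) + 1) - θ ((i:ℤ) + 1 + (m:ℤ))) ^ 2 = m * Wtv n θ := by
  intro m
  induction m with
  | zero => simp
  | succ m ihm =>
    intro hm
    have hmK : m < cycMinSeg n θ := by omega
    set a : ℕ → ℝ := fun i => θ ((i:ℤ) + 1) - θ ((i:ℤ) + 2) with ha
    set b : ℕ → ℝ := fun i => θ ((i:ℤ) + 2) - θ ((i:ℤ) + 2 + (m:ℤ)) with hb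
    have hsplit : ∀ i : ℕ, (θ ((i:ℤ) + 1) - θ ((i:ℤ) + 1 + ((m+1:ℕ):ℤ))) ^ 2
        = a i ^ 2 + 2 * (a i * b i) + b i ^ 2 := by
      intro i
      have harg : ((i:ℤ) + 1 + ((m+1:ℕ):ℤ)) = ((i:ℤ) + 2 + (m:ℤ)) := by push_cast; ring
      rw [harg, ha, hb]; ring
    have hab : ∀ i : ℕ, a i * b i = 0 := by
      intro i
      rcases eq_or_ne (a i) 0 with h | h
      · rw [h]; ring
      · have hjump : θ ((i:ℤ) + 1) ≠ θ (((i:ℤ) + 1) + 1) := by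
          intro hcon; apply h; rw [ha]; simp only
          rw [show ((i:ℤ) + 2) = ((i:ℤ)+1) + 1 by ring, ← hcon]; ring
        have := const_run n θ ((i:ℤ)+1) hjump m hmK
        have hb0 : b i = 0 := by
          rw [hb]; simp only
          rw [show ((i:ℤ) + 2 + (m:ℤ)) = ((i:ℤ)+1) + 1 + (m:ℤ) by ring,
              show ((i:ℤ) + 2) = ((i:ℤ)+1) + 1 by ring, this]
          ring
        rw [hb0]; ring
    have hb2 : ∑ i ∈ range n, b i ^ 2 = m * Wtv n θ := by
      have hper : ∀ j : ℤ, (θ ((j + (n:ℤ)) + 1) - θ ((j + (n:ℤ)) + 1 + (m:ℤ))) ^ 2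
          = (θ (j + 1) - θ (j + 1 + (m:ℤ))) ^ 2 := by
        intro j
        have e2 : (j + (n:ℤ) + 1 + (m:ℤ)) = (j + 1 + (m:ℤ)) + n := by ring
        rw [e2, hp]
        have e1 : (j + (n:ℤ) + 1) = (j + 1) + n := by ring
        rw [e1, hp]
      have := shift_sum n (fun j => (θ (j + 1) - θ (j + 1 + (m:ℤ))) ^ 2) hper 1
      calc ∑ i ∈ range n, b i ^ 2
          = ∑ i ∈ range n, (θ (((i:ℤ)+1) + 1) - θ (((i:ℤ)+1) + 1 + (m:ℤ))) ^ 2 := by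
            apply Finset.sum_congr rfl; intro i _
            rw [hb]; simp only; ring_nf
        _ = ∑ i ∈ range n, (θ ((i:ℤ) + 1) - θ ((i:ℤ) + 1 + (m:ℤ))) ^ 2 := this
        _ = m * Wtv n θ := ihm (by omega)
    calc ∑ i ∈ range n, (θ ((i:ℤ) + 1) - θ ((i:ℤ) + 1 + ((m+1:ℕ):ℤ))) ^ 2
        = ∑ i ∈ range n, (a i ^ 2 + 2 * (a i * b i) + b i ^ 2) := by
          apply Finset.sum_congr rfl; intro i _; exact hsplit i
      _ = ∑ i ∈ range n, a i ^ 2 + ∑ i ∈ range n, (2 * (a i * b i)) + ∑ i ∈ range n, b i ^ 2 := by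
          rw [Finset.sum_add_distrib, Finset.sum_add_distrib]
      _ = Wtv n θ + 0 + m * Wtv n θ := by
          have hz : ∑ i ∈ range n, (2 * (a i * b i)) = 0 :=
            Finset.sum_eq_zero (fun i _ => by rw [hab i]; ring)
          rw [hz, hb2]
          have hWa : ∑ i ∈ range n, a i ^ 2 = Wtv n θ := by
            unfold Wtv
            apply Finset.sum_congr rfl; intro i _; rw [ha]
          rw [hWa]
      _ = ((m+1:ℕ):ℝ) * Wtv n θ := by push_cast; ring


lemma part_i_S (hp : ∀ i : ℤ, θ (i + n) = θ i) (k l : ℕ)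
    (hkl : k + l ≤ cycMinSeg n θ) :
    ∑ i ∈ range n, (θ ((i:ℤ) + 1) - θ ((i:ℤ) + 1 + (k:ℤ) + (l:ℤ))) ^ 2
      = ((k:ℝ) + l) * Wtv n θ := by
  have := Ssum_eq n θ hp (k + l) hkl
  calc ∑ i ∈ range n, (θ ((i:ℤ) + 1) - θ ((i:ℤ) + 1 + (k:ℤ) + (l:ℤ))) ^ 2
      = ∑ i ∈ range n, (θ ((i:ℤ) + 1) - θ ((i:ℤ) + 1 + ((k+l : ℕ):ℤ))) ^ 2 := by
        apply Finset.sum_congr rfl; intro i _; congr 2; push_cast; ring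
    _ = ((k+l : ℕ):ℝ) * Wtv n θ := this
    _ = ((k:ℝ) + l) * Wtv n θ := by push_cast; ring

lemma part_i_G (hn : 0 < n) (hp : ∀ i : ℤ, θ (i + n) = θ i)
    (hnc : ∃ i j : ℤ, θ i ≠ θ j) (k l : ℕ) (hkl : k + l ≤ cycMinSeg n θ) :
    Gmat n θ k l = 2 * max (k:ℝ) (l:ℝ) := by
  have hW := Wtv_pos n θ hn hp hnc
  have hS : ∑ i ∈ range n, (θ ((i:ℤ) + 1) - θ ((i:ℤ) + 1 + (k:ℤ) + (l:ℤ))) ^ 2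
      = ((k:ℝ) + l) * Wtv n θ := part_i_S n θ hp k l hkl
  unfold Gmat
  rw [hS]
  have hWne : Wtv n θ ≠ 0 := ne_of_gt hW
  rcases le_total k l with h | h
  · have h' : (k:ℝ) ≤ l := by exact_mod_cast h
    rw [abs_of_nonpos (by linarith), max_eq_right h']
    field_simp
    ring
  · have h' : (l:ℝ) ≤ k := by exact_mod_cast h
    rw [abs_of_nonneg (by linarith), max_eq_left h']
    field_simp
    ring


/-- difference sequence -/
def dd (θ : ℤ → ℝ) (j : ℤ) : ℝ := θ j - θ (j + 1)

end prelim

section abel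
variable {L : ℕ} (h : Fin L → ℝ)

/-- tail sums of `h` -/
def Tpart (L : ℕ) (h : Fin L → ℝ) (m : ℕ) : ℝ :=
  ∑ k : Fin L, if m ≤ (k : ℕ) then h k else 0

lemma Tpart_zero (hc0 : ∑ k : Fin L, h k = 0) : Tpart L h 0 = 0 := by
  unfold Tpart; simpa using hc0

lemma Tpart_ge (m : ℕ) (hm : L ≤ m) : Tpart L h m = 0 := by
  unfold Tpart
  apply Finset.sum_eq_zero
  intro k _
  have : ¬ (m ≤ (k : ℕ)) := by omega
  simp [this]

lemma Tpart_sub (m : ℕ) (hm : m < L) :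
    Tpart L h m - Tpart L h (m + 1) = h ⟨m, hm⟩ := by
  unfold Tpart
  rw [← Finset.sum_sub_distrib]
  have hpt : ∀ k : Fin L,
      (if m ≤ (k : ℕ) then h k else 0) - (if m + 1 ≤ (k : ℕ) then h k else 0)
        = if k = (⟨m, hm⟩ : Fin L) then h k else 0 := by
    intro k
    by_cases hk : k = (⟨m, hm⟩ : Fin L)
    · subst hk; simp
    · have hkm : (k : ℕ) ≠ m := fun hh => hk (Fin.ext hh)
      by_cases h1 : m ≤ (k : ℕ)
      · have h2 : m + 1 ≤ (k : ℕ) := by omega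
        simp [h1, h2, hk]
      · have h2 : ¬ (m + 1 ≤ (k : ℕ)) := by omega
        simp [h1, h2, hk]
  rw [Finset.sum_congr rfl (fun k _ => hpt k)]
  simp

lemma Tpart_total :
    ∑ m ∈ range L, Tpart L h m = ∑ k : Fin L, ((k : ℕ) + 1 : ℝ) * h k := by
  unfold Tpart
  rw [Finset.sum_comm]
  apply Finset.sum_congr rfl
  intro k _
  have hfilter : (range L).filter (fun m => m ≤ (k : ℕ)) = range ((k : ℕ) + 1) := by
    ext m
    simp only [Finset.mem_filter, Finset.mem_range]
    constructor
    · rintro ⟨_, h2⟩; omega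
    · intro hm
      have := k.isLt
      constructor <;> omega
  rw [← Finset.sum_filter, hfilter, Finset.sum_const, Finset.card_range]
  simp [mul_comm]

/-- Abel summation, forward version -/
lemma abel_fwd (hc0 : ∑ k : Fin L, h k = 0) (θ : ℤ → ℝ) (j : ℤ) :
    ∑ k : Fin L, h k * θ (j + (k : ℕ) + 1)
      = - ∑ m ∈ range L, Tpart L h m * dd θ (j + m) := by
  have step1 : ∑ k : Fin L, h k * θ (j + (k : ℕ) + 1)
      = ∑ m ∈ range L, (Tpart L h m - Tpart L h (m + 1)) * θ (j + m + 1) := by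
    rw [Finset.sum_range fun m => (Tpart L h m - Tpart L h (m+1)) * θ (j + m + 1)]
    apply Finset.sum_congr rfl
    intro k _
    rw [Tpart_sub h (k : ℕ) k.isLt]
  rw [step1]
  have tele := Finset.sum_range_sub' (fun m => Tpart L h m * θ (j + (m:ℕ))) L
  have key : ∀ m ∈ range L, (Tpart L h m - Tpart L h (m + 1)) * θ (j + m + 1)
      = -(Tpart L h m * dd θ (j + m))
        + (Tpart L h m * θ (j + ((m:ℕ):ℤ)) - Tpart L h (m+1) * θ (j + (((m+1):ℕ):ℤ))) := by
    intro m _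
    have e : (j + (((m+1):ℕ):ℤ)) = j + (m:ℤ) + 1 := by push_cast; ring
    have e2 : dd θ (j + (m:ℤ)) = θ (j + (m:ℤ)) - θ (j + (m:ℤ) + 1) := by
      unfold dd
      rw [show (j + (m:ℤ)) + 1 = j + (m:ℤ) + 1 from by ring]
    rw [e, e2]; ring
  rw [Finset.sum_congr rfl key, Finset.sum_add_distrib, tele]
  rw [Tpart_zero h hc0, Tpart_ge h L le_rfl]
  simp

/-- Abel summation, backward version -/
lemma abel_bwd (hc0 : ∑ k : Fin L, h k = 0) (θ : ℤ → ℝ) (j : ℤ) :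
    ∑ k : Fin L, h k * θ (j - (k : ℕ))
      = ∑ m ∈ range L, Tpart L h m * dd θ (j - m) := by
  have step1 : ∑ k : Fin L, h k * θ (j - (k : ℕ))
      = ∑ m ∈ range L, (Tpart L h m - Tpart L h (m + 1)) * θ (j - m) := by
    rw [Finset.sum_range fun m => (Tpart L h m - Tpart L h (m+1)) * θ (j - m)]
    apply Finset.sum_congr rfl
    intro k _
    rw [Tpart_sub h (k : ℕ) k.isLt]
  rw [step1]
  have tele := Finset.sum_range_sub' (fun m => Tpart L h m * θ (j - (m:ℕ) + 1)) L
  have key : ∀ m ∈ range L, (Tpart L h m - Tpart L h (m + 1)) * θ (j - m)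
      = Tpart L h m * dd θ (j - m)
        + (Tpart L h m * θ (j - ((m:ℕ):ℤ) + 1) - Tpart L h (m+1) * θ (j - (((m+1):ℕ):ℤ) + 1)) := by
    intro m _
    have e : (j - (((m+1):ℕ):ℤ) + 1) = j - (m:ℤ) := by push_cast; ring
    have e2 : dd θ (j - (m:ℤ)) = θ (j - (m:ℤ)) - θ (j - (m:ℤ) + 1) := by
      unfold dd
      rw [show (j - (m:ℤ)) + 1 = j - (m:ℤ) + 1 from by ring]
    rw [e, e2]; ring
  rw [Finset.sum_congr rfl key, Finset.sum_add_distrib, tele]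
  rw [Tpart_zero h hc0, Tpart_ge h L le_rfl]
  simp

end abel


section quad
variable (n L : ℕ) (θ : ℤ → ℝ)

lemma dd_per (hp : ∀ i : ℤ, θ (i + n) = θ i) (j : ℤ) : dd θ (j + n) = dd θ j := by
  unfold dd
  rw [hp j, show (j + (n:ℤ) + 1) = (j + 1) + n from by ring, hp]

lemma ddW (hp : ∀ i : ℤ, θ (i + n) = θ i) (c : ℤ) :
    ∑ i ∈ range n, dd θ ((i:ℤ) + c) ^ 2 = Wtv n θ := by
  have hper : ∀ j : ℤ, dd θ (j + n) ^ 2 = dd θ j ^ 2 := fun j => by rw [dd_per n θ hp]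
  rw [shift_sum n (fun j => dd θ j ^ 2) hper c]
  rw [← shift_sum n (fun j => dd θ j ^ 2) hper 1]
  unfold Wtv dd
  apply Finset.sum_congr rfl
  intro i _
  rw [show ((i:ℤ) + 1 + 1) = (i:ℤ) + 2 from by ring]

lemma dd_orth (x y : ℤ) (hne : x ≠ y) (hlt : |x - y| < (cycMinSeg n θ : ℤ)) :
    dd θ x * dd θ y = 0 := by
  rcases lt_or_gt_of_ne hne with hxy | hxy
  · set t : ℕ := (y - x).toNat with ht
    have ht0 : 0 < t := by omega
    have htc : (t : ℤ) = y - x := by omega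
    have htK : t < cycMinSeg n θ := by
      rw [abs_sub_comm] at hlt
      rw [abs_of_pos (by omega)] at hlt
      omega
    have := dd_mul_dd n θ t ht0 htK x
    unfold dd
    rw [show x + (t:ℤ) = y from by omega] at this
    exact this
  · set t : ℕ := (x - y).toNat with ht
    have ht0 : 0 < t := by omega
    have htc : (t : ℤ) = x - y := by omega
    have htK : t < cycMinSeg n θ := by
      rw [abs_of_pos (by omega)] at hlt
      omega
    have := dd_mul_dd n θ t ht0 htK y
    unfold dd
    rw [show y + (t:ℤ) = x from by omega] at this
    rw [mul_comm]
    exact this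

lemma quad_norm (hp : ∀ i : ℤ, θ (i + n) = θ i) (T : ℕ → ℝ) (e : ℕ → ℤ)
    (he : ∀ m m', m < L → m' < L → m ≠ m' →
      e m ≠ e m' ∧ |e m - e m'| < (cycMinSeg n θ : ℤ)) :
    ∑ i ∈ range n, (∑ m ∈ range L, T m * dd θ ((i:ℤ) + e m)) ^ 2
      = (∑ m ∈ range L, T m ^ 2) * Wtv n θ := by
  have expand : ∀ i ∈ range n, (∑ m ∈ range L, T m * dd θ ((i:ℤ) + e m)) ^ 2
      = ∑ m ∈ range L, T m ^ 2 * dd θ ((i:ℤ) + e m) ^ 2 := by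
    intro i _
    rw [sq, Finset.sum_mul_sum]
    apply Finset.sum_congr rfl; intro m hm
    rw [Finset.sum_eq_single_of_mem m hm]
    · ring
    · intro m' hm' hne
      have hmm := Finset.mem_range.mp hm
      have hmm' := Finset.mem_range.mp hm'
      obtain ⟨hne', hlt⟩ := he m m' hmm hmm' (fun hh => hne (hh.symm))
      have hz : dd θ ((i:ℤ) + e m) * dd θ ((i:ℤ) + e m') = 0 := by
        apply dd_orth n θ
        · intro hcon; exact hne' (by omega)
        · rw [show ((i:ℤ) + e m - ((i:ℤ) + e m')) = e m - e m' from by ring]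
          exact hlt
      calc T m * dd θ ((i:ℤ) + e m) * (T m' * dd θ ((i:ℤ) + e m'))
          = T m * T m' * (dd θ ((i:ℤ) + e m) * dd θ ((i:ℤ) + e m')) := by ring
        _ = 0 := by rw [hz]; ring
  rw [Finset.sum_congr rfl expand, Finset.sum_comm, Finset.sum_mul]
  apply Finset.sum_congr rfl
  intro m _
  rw [← Finset.mul_sum, ddW n θ hp (e m)]

end quad

section cross
variable (n : ℕ) (θ : ℤ → ℝ)

lemma cross_term (hp : ∀ i : ℤ, θ (i + n) = θ i) {L : ℕ} (h : Fin L → ℝ)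
    (hc0 : ∑ k : Fin L, h k = 0) :
    ∑ k : Fin L, ∑ l : Fin L, h k * h l *
        ∑ i ∈ range n, (θ ((i:ℤ) + 1) - θ ((i:ℤ) + 1 + (((k:ℕ)+1 : ℕ):ℤ) + (((l:ℕ)+1 : ℕ):ℤ))) ^ 2
      = 2 * ∑ i ∈ range n,
          (∑ m ∈ range L, Tpart L h m * dd θ ((i:ℤ) - m)) *
          (∑ m ∈ range L, Tpart L h m * dd θ ((i:ℤ) + 1 + m)) := by
  set V : ℤ → ℝ := fun j => ∑ m ∈ range L, Tpart L h m * dd θ (j + m) with hV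
  set U : ℤ → ℝ := fun j => ∑ m ∈ range L, Tpart L h m * dd θ (j - m) with hU
  have hVper : ∀ j : ℤ, V (j + n) = V j := by
    intro j
    rw [hV]; simp only
    apply Finset.sum_congr rfl
    intro m _
    rw [show (j + (n:ℤ) + (m:ℤ)) = (j + m) + n from by ring, dd_per n θ hp]
  -- A and B
  set A : ℕ → Fin L → ℝ := fun i k => θ ((i:ℤ) + 1) - θ ((i:ℤ) + 1 + ((k:ℕ):ℤ) + 1) with hA
  set B : ℕ → Fin L → Fin L → ℝ :=
    fun i k l => θ ((i:ℤ) + 1 + ((k:ℕ):ℤ) + 1) - θ ((i:ℤ) + 1 + ((k:ℕ):ℤ) + 1 + ((l:ℕ):ℤ) + 1) with hB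
  have hsplit : ∀ k l : Fin L, h k * h l *
      (∑ i ∈ range n, (θ ((i:ℤ) + 1) - θ ((i:ℤ) + 1 + (((k:ℕ)+1 : ℕ):ℤ) + (((l:ℕ)+1 : ℕ):ℤ))) ^ 2)
      = h k * h l * (∑ i ∈ range n, A i k ^ 2)
        + (h k * h l * (2 * ∑ i ∈ range n, A i k * B i k l)
          + h k * h l * (∑ i ∈ range n, B i k l ^ 2)) := by
    intro k l
    have hterm : ∀ i ∈ range n,
        (θ ((i:ℤ) + 1) - θ ((i:ℤ) + 1 + (((k:ℕ)+1 : ℕ):ℤ) + (((l:ℕ)+1 : ℕ):ℤ))) ^ 2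
        = A i k ^ 2 + (2 * (A i k * B i k l) + B i k l ^ 2) := by
      intro i _
      have e : ((i:ℤ) + 1 + (((k:ℕ)+1 : ℕ):ℤ) + (((l:ℕ)+1 : ℕ):ℤ))
          = ((i:ℤ) + 1 + ((k:ℕ):ℤ) + 1 + ((l:ℕ):ℤ) + 1) := by push_cast; ring
      rw [e, hA, hB]; simp only; ring
    rw [Finset.sum_congr rfl hterm, Finset.sum_add_distrib, Finset.sum_add_distrib,
        Finset.mul_sum (range n) (fun i => A i k * B i k l) 2]
    ring
  rw [Finset.sum_congr rfl (fun k _ => Finset.sum_congr rfl (fun l _ => hsplit k l))]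
  simp only [Finset.sum_add_distrib]
  -- S1 = 0
  have hS1 : ∑ k : Fin L, ∑ l : Fin L, h k * h l * (∑ i ∈ range n, A i k ^ 2) = 0 := by
    apply Finset.sum_eq_zero
    intro k _
    have : ∑ l : Fin L, h k * h l * (∑ i ∈ range n, A i k ^ 2)
        = (h k * ∑ i ∈ range n, A i k ^ 2) * ∑ l : Fin L, h l := by
      rw [Finset.mul_sum]
      apply Finset.sum_congr rfl
      intro l _; ring
    rw [this, hc0, mul_zero]
  -- S3 = 0
  have hS3 : ∑ k : Fin L, ∑ l : Fin L, h k * h l * (∑ i ∈ range n, B i k l ^ 2) = 0 := by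
    have hBY : ∀ k l : Fin L, ∑ i ∈ range n, B i k l ^ 2
        = ∑ i ∈ range n, (θ ((i:ℤ) + 1) - θ ((i:ℤ) + 1 + ((l:ℕ):ℤ) + 1)) ^ 2 := by
      intro k l
      have hper : ∀ j : ℤ, (θ ((j + (n:ℤ)) + 1) - θ ((j + (n:ℤ)) + 1 + ((l:ℕ):ℤ) + 1)) ^ 2
          = (θ (j + 1) - θ (j + 1 + ((l:ℕ):ℤ) + 1)) ^ 2 := by
        intro j
        rw [show (j + (n:ℤ) + 1 + ((l:ℕ):ℤ) + 1) = (j + 1 + ((l:ℕ):ℤ) + 1) + n from by ring, hp,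
            show (j + (n:ℤ) + 1) = (j + 1) + n from by ring, hp]
      have := shift_sum n (fun j => (θ (j + 1) - θ (j + 1 + ((l:ℕ):ℤ) + 1)) ^ 2) hper (((k:ℕ):ℤ) + 1)
      rw [← this]
      apply Finset.sum_congr rfl
      intro i _
      rw [hB]; simp only
      ring_nf
    rw [Finset.sum_congr rfl (fun k (_ : k ∈ univ) => Finset.sum_congr rfl
        (fun l (_ : l ∈ univ) => by rw [hBY k l]))]
    have : ∀ k : Fin L, ∑ l : Fin L, h k * h l *
        (∑ i ∈ range n, (θ ((i:ℤ) + 1) - θ ((i:ℤ) + 1 + ((l:ℕ):ℤ) + 1)) ^ 2)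
        = h k * ∑ l : Fin L, h l *
          (∑ i ∈ range n, (θ ((i:ℤ) + 1) - θ ((i:ℤ) + 1 + ((l:ℕ):ℤ) + 1)) ^ 2) := by
      intro k
      rw [Finset.mul_sum]
      apply Finset.sum_congr rfl
      intro l _; ring
    rw [Finset.sum_congr rfl (fun k (_ : k ∈ univ) => this k), ← Finset.sum_mul, hc0, zero_mul]
  -- S2
  have hBV : ∀ (i : ℕ) (k : Fin L), ∑ l : Fin L, h l * B i k l = V ((i:ℤ) + ((k:ℕ):ℤ) + 2) := by
    intro i k
    have e1 : ∀ l : Fin L, h l * B i k l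
        = h l * θ ((i:ℤ) + ((k:ℕ):ℤ) + 2) - h l * θ (((i:ℤ) + ((k:ℕ):ℤ) + 2) + ((l:ℕ):ℤ) + 1) := by
      intro l
      rw [hB]; simp only
      rw [show ((i:ℤ) + 1 + ((k:ℕ):ℤ) + 1 + ((l:ℕ):ℤ) + 1)
            = (((i:ℤ) + ((k:ℕ):ℤ) + 2) + ((l:ℕ):ℤ) + 1) from by ring,
          show ((i:ℤ) + 1 + ((k:ℕ):ℤ) + 1) = ((i:ℤ) + ((k:ℕ):ℤ) + 2) from by ring]
      ring
    rw [Finset.sum_congr rfl (fun l _ => e1 l), Finset.sum_sub_distrib, ← Finset.sum_mul, hc0,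
        zero_mul, abel_fwd h hc0 θ ((i:ℤ) + ((k:ℕ):ℤ) + 2)]
    rw [hV]; simp only
    ring
  have hS2 : ∑ k : Fin L, ∑ l : Fin L, h k * h l * (2 * ∑ i ∈ range n, A i k * B i k l)
      = 2 * ∑ i ∈ range n, U (i:ℤ) * V ((i:ℤ) + 1) := by
    have step1 : ∀ k : Fin L, ∑ l : Fin L, h k * h l * (2 * ∑ i ∈ range n, A i k * B i k l)
        = 2 * h k * ∑ i ∈ range n, A i k * V ((i:ℤ) + ((k:ℕ):ℤ) + 2) := by
      intro k
      have e1 : ∀ l : Fin L, h k * h l * (2 * ∑ i ∈ range n, A i k * B i k l)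
          = 2 * h k * ∑ i ∈ range n, A i k * (h l * B i k l) := by
        intro l
        simp only [Finset.mul_sum]
        apply Finset.sum_congr rfl
        intro i _; ring
      rw [Finset.sum_congr rfl (fun l _ => e1 l), ← Finset.mul_sum, Finset.sum_comm]
      congr 1
      apply Finset.sum_congr rfl
      intro i _
      rw [← Finset.mul_sum, hBV i k]
    have step2 : ∀ k : Fin L, ∑ i ∈ range n, A i k * V ((i:ℤ) + ((k:ℕ):ℤ) + 2)
        = ∑ i ∈ range n, (θ ((i:ℤ) - ((k:ℕ):ℤ)) - θ ((i:ℤ) + 1)) * V ((i:ℤ) + 1) := by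
      intro k
      have hgper : ∀ j : ℤ, (θ ((j + (n:ℤ)) + 1) - θ ((j + (n:ℤ)) + 1 + ((k:ℕ):ℤ) + 1))
            * V ((j + (n:ℤ)) + ((k:ℕ):ℤ) + 2)
          = (θ (j + 1) - θ (j + 1 + ((k:ℕ):ℤ) + 1)) * V (j + ((k:ℕ):ℤ) + 2) := by
        intro j
        rw [show (j + (n:ℤ) + 1 + ((k:ℕ):ℤ) + 1) = (j + 1 + ((k:ℕ):ℤ) + 1) + n from by ring, hp,
            show (j + (n:ℤ) + 1) = (j + 1) + n from by ring, hp,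
            show (j + (n:ℤ) + ((k:ℕ):ℤ) + 2) = (j + ((k:ℕ):ℤ) + 2) + n from by ring, hVper]
      have hs := shift_sum n
        (fun j => (θ (j + 1) - θ (j + 1 + ((k:ℕ):ℤ) + 1)) * V (j + ((k:ℕ):ℤ) + 2)) hgper
        (-(((k:ℕ):ℤ) + 1))
      calc ∑ i ∈ range n, A i k * V ((i:ℤ) + ((k:ℕ):ℤ) + 2)
          = ∑ i ∈ range n, (θ ((i:ℤ) + 1) - θ ((i:ℤ) + 1 + ((k:ℕ):ℤ) + 1)) * V ((i:ℤ) + ((k:ℕ):ℤ) + 2) := by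
            apply Finset.sum_congr rfl; intro i _; rw [hA]
        _ = ∑ i ∈ range n, (θ (((i:ℤ) + -(((k:ℕ):ℤ) + 1)) + 1)
              - θ (((i:ℤ) + -(((k:ℕ):ℤ) + 1)) + 1 + ((k:ℕ):ℤ) + 1))
              * V (((i:ℤ) + -(((k:ℕ):ℤ) + 1)) + ((k:ℕ):ℤ) + 2) := hs.symm
        _ = ∑ i ∈ range n, (θ ((i:ℤ) - ((k:ℕ):ℤ)) - θ ((i:ℤ) + 1)) * V ((i:ℤ) + 1) := by
            apply Finset.sum_congr rfl; intro i _
            rw [show ((i:ℤ) + -(((k:ℕ):ℤ) + 1) + 1 + ((k:ℕ):ℤ) + 1) = ((i:ℤ) + 1) from by ring,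
                show ((i:ℤ) + -(((k:ℕ):ℤ) + 1) + 1) = ((i:ℤ) - ((k:ℕ):ℤ)) from by ring,
                show ((i:ℤ) + -(((k:ℕ):ℤ) + 1) + ((k:ℕ):ℤ) + 2) = ((i:ℤ) + 1) from by ring]
    have step3 : ∑ k : Fin L, 2 * h k * ∑ i ∈ range n,
        (θ ((i:ℤ) - ((k:ℕ):ℤ)) - θ ((i:ℤ) + 1)) * V ((i:ℤ) + 1)
        = 2 * ∑ i ∈ range n, U (i:ℤ) * V ((i:ℤ) + 1) := by
      have e1 : ∀ k : Fin L, 2 * h k * ∑ i ∈ range n,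
          (θ ((i:ℤ) - ((k:ℕ):ℤ)) - θ ((i:ℤ) + 1)) * V ((i:ℤ) + 1)
          = ∑ i ∈ range n, 2 * ((h k * θ ((i:ℤ) - ((k:ℕ):ℤ))
              - h k * θ ((i:ℤ) + 1)) * V ((i:ℤ) + 1)) := by
        intro k
        rw [Finset.mul_sum]
        apply Finset.sum_congr rfl
        intro i _; ring
      rw [Finset.sum_congr rfl (fun k (_ : k ∈ univ) => e1 k), Finset.sum_comm, Finset.mul_sum]
      apply Finset.sum_congr rfl
      intro i _
      have e3 : (∑ k : Fin L, h k * θ ((i:ℤ) - ((k:ℕ):ℤ))) - (∑ k : Fin L, h k) * θ ((i:ℤ) + 1)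
          = ∑ k : Fin L, (h k * θ ((i:ℤ) - ((k:ℕ):ℤ)) - h k * θ ((i:ℤ) + 1)) := by
        rw [Finset.sum_mul, ← Finset.sum_sub_distrib]
      have e2 : ∑ k : Fin L, 2 * ((h k * θ ((i:ℤ) - ((k:ℕ):ℤ)) - h k * θ ((i:ℤ) + 1)) * V ((i:ℤ) + 1))
          = 2 * (((∑ k : Fin L, h k * θ ((i:ℤ) - ((k:ℕ):ℤ)))
              - (∑ k : Fin L, h k) * θ ((i:ℤ) + 1)) * V ((i:ℤ) + 1)) := by
        rw [e3, Finset.sum_mul, Finset.mul_sum]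
      rw [e2, hc0, abel_bwd h hc0 θ (i:ℤ)]
      rw [hU]; simp only
      ring
    rw [Finset.sum_congr rfl (fun k (_ : k ∈ univ) => by rw [step1 k, step2 k]), step3]
  rw [hS1, hS2, hS3]
  ring
end cross

section abspart
variable {L : ℕ} (h : Fin L → ℝ)

lemma abs_part (hc0 : ∑ k : Fin L, h k = 0)
    (hc1 : ∑ k : Fin L, (((k:ℕ):ℝ) + 1) * h k = 0) :
    ∑ k : Fin L, ∑ l : Fin L, h k * h l * |((((k:ℕ)+1 : ℕ)):ℝ) - ((((l:ℕ)+1 : ℕ)):ℝ)|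
      = - (2 * ∑ m ∈ range L, (Tpart L h m) ^ 2) := by
  classical
  set χ : ℕ → Fin L → ℝ := fun m k => if m ≤ (k:ℕ) then (1:ℝ) else 0 with hχ
  have habs : ∀ k l : Fin L, |((((k:ℕ)+1 : ℕ)):ℝ) - ((((l:ℕ)+1 : ℕ)):ℝ)|
      = (((k:ℕ):ℝ) + 1) + (((l:ℕ):ℝ) + 1) - 2 * ∑ m ∈ range L, χ m k * χ m l := by
    intro k l
    have hsum : ∑ m ∈ range L, χ m k * χ m l = ((min ((k:ℕ)+1) ((l:ℕ)+1) : ℕ) : ℝ) := by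
      have e1 : ∀ m ∈ range L, χ m k * χ m l = if m ≤ min ((k:ℕ)) ((l:ℕ)) then (1:ℝ) else 0 := by
        intro m _
        rw [hχ]; simp only
        by_cases h1 : m ≤ (k:ℕ) <;> by_cases h2 : m ≤ (l:ℕ) <;>
          [skip; skip; skip; skip] <;> simp [h1, h2, Nat.le_min] <;> omega
      rw [Finset.sum_congr rfl e1, Finset.sum_boole]
      have e2 : (range L).filter (fun m => m ≤ min ((k:ℕ)) ((l:ℕ))) = range (min ((k:ℕ)) ((l:ℕ)) + 1) := by
        ext m
        simp only [Finset.mem_filter, Finset.mem_range]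
        have hk := k.isLt
        have hl := l.isLt
        constructor
        · rintro ⟨_, h2⟩; omega
        · intro hm; constructor <;> omega
      rw [e2, Finset.card_range,
          show min ((k:ℕ)+1) ((l:ℕ)+1) = min ((k:ℕ)) ((l:ℕ)) + 1 from by omega]
    rw [hsum]
    rcases Nat.le_total ((k:ℕ)) ((l:ℕ)) with hkl | hkl
    · rw [show min ((k:ℕ)+1) ((l:ℕ)+1) = min ((k:ℕ)) ((l:ℕ)) + 1 from by omega,
          show min ((k:ℕ)) ((l:ℕ)) = (k:ℕ) from by omega]
      have hc : ((k:ℕ):ℝ) ≤ ((l:ℕ):ℝ) := by exact_mod_cast hkl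
      rw [abs_of_nonpos (by push_cast; linarith)]
      push_cast; ring
    · rw [show min ((k:ℕ)+1) ((l:ℕ)+1) = min ((k:ℕ)) ((l:ℕ)) + 1 from by omega,
          show min ((k:ℕ)) ((l:ℕ)) = (l:ℕ) from by omega]
      have hc : ((l:ℕ):ℝ) ≤ ((k:ℕ):ℝ) := by exact_mod_cast hkl
      rw [abs_of_nonneg (by push_cast; linarith)]
      push_cast; ring
  rw [Finset.sum_congr rfl (fun k (_ : k ∈ univ) => Finset.sum_congr rfl
      (fun l (_ : l ∈ univ) => by rw [habs k l]))]
  have expand : ∀ k l : Fin L, h k * h l * ((((k:ℕ):ℝ) + 1) + (((l:ℕ):ℝ) + 1)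
        - 2 * ∑ m ∈ range L, χ m k * χ m l)
      = ((((k:ℕ):ℝ) + 1) * h k) * h l + h k * ((((l:ℕ):ℝ) + 1) * h l)
        - 2 * ∑ m ∈ range L, (h k * χ m k) * (h l * χ m l) := by
    intro k l
    have e4 : h k * h l * (∑ m ∈ range L, χ m k * χ m l)
        = ∑ m ∈ range L, (h k * χ m k) * (h l * χ m l) := by
      rw [Finset.mul_sum]
      apply Finset.sum_congr rfl; intro m _; ring
    rw [← e4]
    ring
  rw [Finset.sum_congr rfl (fun k (_ : k ∈ univ) => Finset.sum_congr rfl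
      (fun l (_ : l ∈ univ) => expand k l))]
  simp only [Finset.sum_sub_distrib, Finset.sum_add_distrib]
  have p1 : ∑ k : Fin L, ∑ l : Fin L, ((((k:ℕ):ℝ) + 1) * h k) * h l = 0 := by
    apply Finset.sum_eq_zero
    intro k _
    rw [← Finset.mul_sum, hc0, mul_zero]
  have p2 : ∑ k : Fin L, ∑ l : Fin L, h k * ((((l:ℕ):ℝ) + 1) * h l) = 0 := by
    apply Finset.sum_eq_zero
    intro k _
    rw [← Finset.mul_sum, hc1, mul_zero]
  have p3 : ∑ k : Fin L, ∑ l : Fin L, (2 * ∑ m ∈ range L, (h k * χ m k) * (h l * χ m l))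
      = 2 * ∑ m ∈ range L, (Tpart L h m) ^ 2 := by
    have hT : ∀ m : ℕ, ∑ k : Fin L, h k * χ m k = Tpart L h m := by
      intro m
      unfold Tpart
      apply Finset.sum_congr rfl
      intro k _
      rw [hχ]; simp only
      split_ifs <;> simp
    have e5 : ∀ k : Fin L, ∑ l : Fin L, (2 * ∑ m ∈ range L, (h k * χ m k) * (h l * χ m l))
        = 2 * ∑ m ∈ range L, ∑ l : Fin L, (h k * χ m k) * (h l * χ m l) := by
      intro k
      rw [← Finset.mul_sum, Finset.sum_comm]
    rw [Finset.sum_congr rfl (fun k (_ : k ∈ univ) => e5 k), ← Finset.mul_sum, Finset.sum_comm]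
    congr 1
    apply Finset.sum_congr rfl
    intro m _
    have e6 : ∑ k : Fin L, ∑ l : Fin L, (h k * χ m k) * (h l * χ m l)
        = (∑ k : Fin L, h k * χ m k) * (∑ l : Fin L, h l * χ m l) :=
      (Finset.sum_mul_sum univ univ _ _).symm
    rw [e6, hT m, sq]
  rw [p1, p2, p3]
  ring

end abspart

lemma quad_pos (n L : ℕ) (hn : 0 < n) (θ : ℤ → ℝ) (hp : ∀ i : ℤ, θ (i + n) = θ i)
    (hnc : ∃ i j : ℤ, θ i ≠ θ j) (hsep : L ≤ cycMinSeg n θ) (σ : ℝ) (hσ : 0 < σ)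
    (h : Fin L → ℝ) (hc0 : ∑ k : Fin L, h k = 0)
    (hc1 : ∑ k : Fin L, (((k:ℕ):ℝ) + 1) * h k = 0) (hne : h ≠ 0) :
    0 < quadForm n L θ σ h := by
  classical
  have hW : 0 < Wtv n θ := Wtv_pos n θ hn hp hnc
  have hnR : (0:ℝ) < n := by exact_mod_cast hn
  have hr0 : 0 < Wtv n θ / (n * σ^2) := by positivity
  set r := Wtv n θ / ((n:ℝ) * σ^2) with hrdef
  set W := Wtv n θ with hWdef
  -- split the quadratic form
  have hsplit : quadForm n L θ σ h
      = (∑ k : Fin L, ∑ l : Fin L, h k * h l * (if k = l then (1:ℝ) else 0))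
        - (r * (∑ k : Fin L, ∑ l : Fin L,
              h k * h l * |((((k:ℕ)+1 : ℕ)):ℝ) - ((((l:ℕ)+1 : ℕ)):ℝ)|)
          + (r * (1/W)) * (∑ k : Fin L, ∑ l : Fin L, h k * h l *
            ∑ i ∈ range n, (θ ((i:ℤ) + 1)
              - θ ((i:ℤ) + 1 + (((k:ℕ)+1 : ℕ):ℤ) + (((l:ℕ)+1 : ℕ):ℤ))) ^ 2)) := by
    unfold quadForm Gmat
    have hpt : ∀ k l : Fin L, h k * h l *
        ((if k = l then (1:ℝ) else 0) - W / ((n:ℝ) * σ^2) *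
          (|((((k:ℕ)+1 : ℕ)):ℝ) - ((((l:ℕ)+1 : ℕ)):ℝ)| + 1/W *
            ∑ i ∈ range n, (θ ((i:ℤ) + 1)
              - θ ((i:ℤ) + 1 + (((k:ℕ)+1 : ℕ):ℤ) + (((l:ℕ)+1 : ℕ):ℤ))) ^ 2))
        = h k * h l * (if k = l then (1:ℝ) else 0)
          - (r * (h k * h l * |((((k:ℕ)+1 : ℕ)):ℝ) - ((((l:ℕ)+1 : ℕ)):ℝ)|)
            + (r * (1/W)) * (h k * h l *
              ∑ i ∈ range n, (θ ((i:ℤ) + 1)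
                - θ ((i:ℤ) + 1 + (((k:ℕ)+1 : ℕ):ℤ) + (((l:ℕ)+1 : ℕ):ℤ))) ^ 2)) := by
      intro k l
      rw [hrdef]
      ring
    rw [Finset.sum_congr rfl (fun k (_ : k ∈ univ) => Finset.sum_congr rfl
        (fun l (_ : l ∈ univ) => hpt k l))]
    simp only [Finset.sum_sub_distrib, Finset.sum_add_distrib, ← Finset.mul_sum]
  have hdiag : ∑ k : Fin L, ∑ l : Fin L, h k * h l * (if k = l then (1:ℝ) else 0)
      = ∑ k : Fin L, h k ^ 2 := by
    apply Finset.sum_congr rfl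
    intro k _
    have : ∀ l : Fin L, h k * h l * (if k = l then (1:ℝ) else 0)
        = if k = l then h k * h l else 0 := by
      intro l; split_ifs <;> simp
    rw [Finset.sum_congr rfl (fun l _ => this l), Finset.sum_ite_eq, if_pos (Finset.mem_univ k), sq]
  have habs := abs_part h hc0 hc1
  have hcross := cross_term n θ hp h hc0
  -- norms of U and V
  set T : ℕ → ℝ := fun m => Tpart L h m with hT
  set St : ℝ := ∑ m ∈ range L, T m ^ 2 with hSt
  have hSt0 : 0 ≤ St := Finset.sum_nonneg (fun m _ => sq_nonneg _)
  have hKL : (L:ℤ) ≤ (cycMinSeg n θ : ℤ) := by exact_mod_cast hsep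
  have hU2 : ∑ i ∈ range n, (∑ m ∈ range L, T m * dd θ ((i:ℤ) - m)) ^ 2 = St * W := by
    have := quad_norm n L θ hp T (fun m => -(m:ℤ)) (by
      intro m m' hm hm' hne'
      refine ⟨?_, ?_⟩
      · show -(m:ℤ) ≠ -(m':ℤ); omega
      · show |(-(m:ℤ)) - (-(m':ℤ))| < (cycMinSeg n θ : ℤ)
        rw [abs_sub_lt_iff]; constructor <;> omega)
    rw [← this]
    rfl
  have hV2 : ∑ i ∈ range n, (∑ m ∈ range L, T m * dd θ ((i:ℤ) + 1 + m)) ^ 2 = St * W := by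
    have := quad_norm n L θ hp T (fun m => 1 + (m:ℤ)) (by
      intro m m' hm hm' hne'
      refine ⟨?_, ?_⟩
      · show 1 + (m:ℤ) ≠ 1 + (m':ℤ); omega
      · show |(1 + (m:ℤ)) - (1 + (m':ℤ))| < (cycMinSeg n θ : ℤ)
        rw [abs_sub_lt_iff]; constructor <;> omega)
    rw [← this]
    apply Finset.sum_congr rfl
    intro i _
    congr 1
    apply Finset.sum_congr rfl
    intro m _
    rw [show ((i:ℤ) + (1 + (m:ℤ))) = ((i:ℤ) + 1 + (m:ℤ)) from by ring]
  set F : ℕ → ℝ := fun i => ∑ m ∈ range L, T m * dd θ ((i:ℤ) - m) with hF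
  set G : ℕ → ℝ := fun i => ∑ m ∈ range L, T m * dd θ ((i:ℤ) + 1 + m) with hG
  have hCS := Finset.sum_mul_sq_le_sq_mul_sq (range n) F G
  have hFG : ∑ i ∈ range n, F i * G i ≤ St * W := by
    have h1 : (∑ i ∈ range n, F i * G i)^2 ≤ (St * W) * (St * W) := by
      calc (∑ i ∈ range n, F i * G i)^2
          ≤ (∑ i ∈ range n, F i ^2) * (∑ i ∈ range n, G i ^2) := hCS
        _ = (St * W) * (St * W) := by rw [hU2, hV2]
    nlinarith [mul_nonneg hSt0 hW.le]
  -- assemble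
  have hpos : 0 < ∑ k : Fin L, h k ^ 2 := by
    obtain ⟨k, hk⟩ := Function.ne_iff.mp hne
    apply Finset.sum_pos' (fun k _ => sq_nonneg _)
    exact ⟨k, Finset.mem_univ k, by rw [← sq_abs]; exact pow_pos (abs_pos.mpr hk) 2⟩
  rw [hsplit, hdiag, habs, hcross]
  have hkey : (r * (1/W)) * (2 * ∑ i ∈ range n, F i * G i) ≤ 2 * r * St := by
    have hco : (0:ℝ) ≤ r * (1/W) := by positivity
    have h1 : (r * (1/W)) * (2 * ∑ i ∈ range n, F i * G i)
        ≤ (r * (1/W)) * (2 * (St * W)) := by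
      apply mul_le_mul_of_nonneg_left (by linarith) hco
    have h2 : (r * (1/W)) * (2 * (St * W)) = 2 * r * St := by
      field_simp
    linarith
  have hneg : r * (-(2 * St)) = -(2 * r * St) := by ring
  linarith


section minimizer
variable (n L : ℕ) (θ : ℤ → ℝ) (σ : ℝ)

/-- the bilinear form associated with `quadForm` -/
noncomputable def Bform (c c' : Fin L → ℝ) : ℝ :=
  ∑ k : Fin L, ∑ l : Fin L, c k * c' l *
    ((if k = l then (1 : ℝ) else 0)
      - Wtv n θ / (n * σ ^ 2) * Gmat n θ ((k : ℕ) + 1) ((l : ℕ) + 1))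

lemma Bform_quad (c : Fin L → ℝ) : quadForm n L θ σ c = Bform n L θ σ c c := rfl

lemma Bform_sym (x y : Fin L → ℝ) : Bform n L θ σ x y = Bform n L θ σ y x := by
  unfold Bform
  rw [Finset.sum_comm]
  apply Finset.sum_congr rfl
  intro k _
  apply Finset.sum_congr rfl
  intro l _
  have hGsym : Gmat n θ ((l:ℕ)+1) ((k:ℕ)+1) = Gmat n θ ((k:ℕ)+1) ((l:ℕ)+1) := by
    unfold Gmat
    rw [abs_sub_comm]
    congr 2
    apply Finset.sum_congr rfl
    intro i _
    have e : ((i:ℤ) + 1 + (((l:ℕ)+1 : ℕ):ℤ) + (((k:ℕ)+1 : ℕ):ℤ))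
        = ((i:ℤ) + 1 + (((k:ℕ)+1 : ℕ):ℤ) + (((l:ℕ)+1 : ℕ):ℤ)) := by push_cast; ring
    rw [e]
  have hd : (if l = k then (1:ℝ) else 0) = (if k = l then (1:ℝ) else 0) := by
    by_cases hkl : k = l
    · simp [hkl]
    · have hlk : ¬ l = k := fun hh => hkl hh.symm
      simp [hkl, hlk]
  rw [hGsym, hd]
  ring

lemma Bform_add_left (x y z : Fin L → ℝ) :
    Bform n L θ σ (x + y) z = Bform n L θ σ x z + Bform n L θ σ y z := by
  unfold Bform
  simp only [Pi.add_apply, add_mul, Finset.sum_add_distrib]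

lemma Bform_smul_left (r : ℝ) (x z : Fin L → ℝ) :
    Bform n L θ σ (r • x) z = r * Bform n L θ σ x z := by
  unfold Bform
  simp only [Pi.smul_apply, smul_eq_mul, Finset.mul_sum]
  apply Finset.sum_congr rfl; intro k _
  apply Finset.sum_congr rfl; intro l _
  ring

lemma Bform_add_right (x z w : Fin L → ℝ) :
    Bform n L θ σ x (z + w) = Bform n L θ σ x z + Bform n L θ σ x w := by
  rw [Bform_sym, Bform_add_left, Bform_sym n L θ σ z x, Bform_sym n L θ σ w x]

lemma Bform_smul_right (r : ℝ) (x z : Fin L → ℝ) :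
    Bform n L θ σ x (r • z) = r * Bform n L θ σ x z := by
  rw [Bform_sym, Bform_smul_left, Bform_sym n L θ σ z x]

lemma Bform_expand (x y : Fin L → ℝ) :
    Bform n L θ σ (x + y) (x + y)
      = Bform n L θ σ x x + 2 * Bform n L θ σ x y + Bform n L θ σ y y := by
  rw [Bform_add_left, Bform_add_right, Bform_add_right, Bform_sym n L θ σ y x]
  ring

end minimizer

lemma exists_unique_minimizer (n L : ℕ) (hn : 0 < n) (hL : 2 ≤ L) (θ : ℤ → ℝ)
    (hp : ∀ i : ℤ, θ (i + n) = θ i) (hnc : ∃ i j : ℤ, θ i ≠ θ j)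
    (hsep : L ≤ cycMinSeg n θ) (σ : ℝ) (hσ : 0 < σ) :
    ∃! c : Fin L → ℝ,
      ((∑ k : Fin L, c k = 1) ∧ (∑ k : Fin L, (((k:ℕ):ℝ) + 1) * c k = 0)) ∧
      ∀ c' : Fin L → ℝ,
        ((∑ k : Fin L, c' k = 1) ∧ (∑ k : Fin L, (((k:ℕ):ℝ) + 1) * c' k = 0)) →
        quadForm n L θ σ c ≤ quadForm n L θ σ c' := by
  classical
  -- constraint functionals
  set φ₁ : (Fin L → ℝ) →ₗ[ℝ] ℝ :=
    { toFun := fun c => ∑ k : Fin L, c k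
      map_add' := by intro a b; simp [Finset.sum_add_distrib]
      map_smul' := by intro r a; simp [Finset.mul_sum] } with hφ₁
  set φ₂ : (Fin L → ℝ) →ₗ[ℝ] ℝ :=
    { toFun := fun c => ∑ k : Fin L, (((k:ℕ):ℝ) + 1) * c k
      map_add' := by
        intro a b
        simp only [Pi.add_apply, mul_add, Finset.sum_add_distrib]
      map_smul' := by
        intro r a
        simp only [Pi.smul_apply, smul_eq_mul, RingHom.id_apply, Finset.mul_sum]
        apply Finset.sum_congr rfl; intro k _; ring } with hφ₂
  set V : Submodule ℝ (Fin L → ℝ) := LinearMap.ker φ₁ ⊓ LinearMap.ker φ₂ with hV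
  have hmemV : ∀ v : Fin L → ℝ, v ∈ V ↔
      (∑ k : Fin L, v k = 0 ∧ ∑ k : Fin L, (((k:ℕ):ℝ) + 1) * v k = 0) := by
    intro v
    rw [hV, Submodule.mem_inf, LinearMap.mem_ker, LinearMap.mem_ker]
    rfl
  -- the bilinear map
  set Bl : (Fin L → ℝ) →ₗ[ℝ] (Fin L → ℝ) →ₗ[ℝ] ℝ :=
    LinearMap.mk₂ ℝ (Bform n L θ σ) (Bform_add_left n L θ σ) (Bform_smul_left n L θ σ)
      (Bform_add_right n L θ σ) (Bform_smul_right n L θ σ) with hBl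
  have hBl_apply : ∀ x y : Fin L → ℝ, Bl x y = Bform n L θ σ x y := fun x y => rfl
  -- positivity on V
  have hposV : ∀ v : Fin L → ℝ, v ∈ V → v ≠ 0 → 0 < Bform n L θ σ v v := by
    intro v hv hne
    obtain ⟨h1, h2⟩ := (hmemV v).mp hv
    rw [← Bform_quad]
    exact quad_pos n L hn θ hp hnc hsep σ hσ v h1 h2 hne
  have hnonnegV : ∀ v : Fin L → ℝ, v ∈ V → 0 ≤ Bform n L θ σ v v := by
    intro v hv
    by_cases hz : v = 0
    · subst hz
      have : Bform n L θ σ 0 0 = 0 := by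
        unfold Bform
        simp
      rw [this]
    · exact (hposV v hv hz).le
  -- Riesz-type surjectivity on V
  set Φ : V →ₗ[ℝ] Module.Dual ℝ V := (Bl.domRestrict V).compl₂ V.subtype with hΦ
  have hΦ_apply : ∀ (v w : V), Φ v w = Bform n L θ σ v.val w.val := fun v w => rfl
  have hinj : Function.Injective Φ := by
    rw [← LinearMap.ker_eq_bot, Submodule.eq_bot_iff]
    intro v hv
    by_contra hvne
    have hvv : Φ v v = 0 := by rw [LinearMap.mem_ker.mp hv]; rfl
    have : v.val ≠ 0 := fun hh => hvne (Subtype.ext hh)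
    have hpos := hposV v.val v.2 this
    rw [hΦ_apply] at hvv
    linarith
  have hsurj : Function.Surjective Φ := by
    have hfr := Subspace.dual_finrank_eq (K := ℝ) (V := V)
    exact (LinearMap.injective_iff_surjective_of_finrank_eq_finrank hfr.symm).mp hinj
  -- base point
  set c₀ : Fin L → ℝ := fun k => if (k:ℕ) = 0 then 2 else if (k:ℕ) = 1 then -1 else 0 with hc₀
  have h0L : 0 < L := by omega
  have h1L : 1 < L := by omega
  set k0 : Fin L := ⟨0, h0L⟩ with hk0
  set k1 : Fin L := ⟨1, h1L⟩ with hk1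
  have hc₀pt : ∀ k : Fin L, c₀ k
      = 2 * (if k = k0 then (1:ℝ) else 0) + (-1) * (if k = k1 then (1:ℝ) else 0) := by
    intro k
    rw [hc₀]; simp only
    by_cases h0 : (k:ℕ) = 0
    · have : k = k0 := Fin.ext (by simp [h0, hk0])
      subst this
      simp [hk0, hk1, Fin.ext_iff]
    · by_cases h1 : (k:ℕ) = 1
      · have : k = k1 := Fin.ext (by simp [h1, hk1])
        subst this
        simp [hk0, hk1, Fin.ext_iff]
      · have e0 : ¬ k = k0 := by rw [Fin.ext_iff]; simpa [hk0] using h0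
        have e1 : ¬ k = k1 := by rw [Fin.ext_iff]; simpa [hk1] using h1
        simp [h0, h1, e0, e1]
  have hc₀sum : ∑ k : Fin L, c₀ k = 1 := by
    rw [Finset.sum_congr rfl (fun k _ => hc₀pt k), Finset.sum_add_distrib]
    rw [← Finset.mul_sum, ← Finset.mul_sum]
    rw [Finset.sum_ite_eq' univ k0 (fun _ => (1:ℝ)),
        Finset.sum_ite_eq' univ k1 (fun _ => (1:ℝ))]
    norm_num
  have hc₀wsum : ∑ k : Fin L, (((k:ℕ):ℝ) + 1) * c₀ k = 0 := by
    have hpt : ∀ k : Fin L, (((k:ℕ):ℝ) + 1) * c₀ k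
        = 2 * (if k = k0 then (((k:ℕ):ℝ) + 1) else 0)
          + (-1) * (if k = k1 then (((k:ℕ):ℝ) + 1) else 0) := by
      intro k
      rw [hc₀pt k]
      split_ifs <;> ring
    rw [Finset.sum_congr rfl (fun k _ => hpt k), Finset.sum_add_distrib,
        ← Finset.mul_sum, ← Finset.mul_sum,
        Finset.sum_ite_eq' univ k0 (fun k : Fin L => (((k:ℕ):ℝ) + 1)),
        Finset.sum_ite_eq' univ k1 (fun k : Fin L => (((k:ℕ):ℝ) + 1))]
    simp [hk0, hk1]
    norm_num
  obtain ⟨z, hz⟩ := hsurj ((Bl c₀).comp V.subtype)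
  have hz1 : ∑ k : Fin L, z.val k = 0 := ((hmemV z.val).mp z.2).1
  have hz2 : ∑ k : Fin L, (((k:ℕ):ℝ) + 1) * z.val k = 0 := ((hmemV z.val).mp z.2).2
  have hBsub : ∀ x y w : Fin L → ℝ,
      Bform n L θ σ (x - y) w = Bform n L θ σ x w - Bform n L θ σ y w := by
    intro x y w
    have h := Bform_add_left n L θ σ (x - y) y w
    rw [sub_add_cancel] at h
    linarith
  have hBzw : ∀ w : Fin L → ℝ, w ∈ V → Bform n L θ σ z.val w = Bform n L θ σ c₀ w := by
    intro w hw
    exact LinearMap.congr_fun hz ⟨w, hw⟩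
  set cstar : Fin L → ℝ := c₀ - z.val with hcstar
  have horth : ∀ w : Fin L → ℝ, w ∈ V → Bform n L θ σ cstar w = 0 := by
    intro w hw
    rw [hcstar, hBsub, hBzw w hw, sub_self]
  have hPcstar : (∑ k : Fin L, cstar k = 1)
      ∧ (∑ k : Fin L, (((k:ℕ):ℝ) + 1) * cstar k = 0) := by
    constructor
    · rw [hcstar]
      simp only [Pi.sub_apply, Finset.sum_sub_distrib]
      rw [hc₀sum, hz1]; ring
    · rw [hcstar]
      simp only [Pi.sub_apply, mul_sub, Finset.sum_sub_distrib]
      rw [hc₀wsum, hz2]; ring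
  have hdiffV : ∀ c : Fin L → ℝ,
      ((∑ k : Fin L, c k = 1) ∧ (∑ k : Fin L, (((k:ℕ):ℝ) + 1) * c k = 0)) →
      (c - cstar) ∈ V := by
    intro c hc
    rw [hmemV]
    constructor
    · simp only [Pi.sub_apply, Finset.sum_sub_distrib]
      rw [hc.1, hPcstar.1]; ring
    · simp only [Pi.sub_apply, mul_sub, Finset.sum_sub_distrib]
      rw [hc.2, hPcstar.2]; ring
  have hexp : ∀ c' : Fin L → ℝ,
      ((∑ k : Fin L, c' k = 1) ∧ (∑ k : Fin L, (((k:ℕ):ℝ) + 1) * c' k = 0)) →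
      quadForm n L θ σ c' = quadForm n L θ σ cstar
        + Bform n L θ σ (c' - cstar) (c' - cstar) := by
    intro c' hc'
    have hwV := hdiffV c' hc'
    set w : Fin L → ℝ := c' - cstar with hwdef
    have hcw : c' = cstar + w := by rw [hwdef]; abel
    rw [hcw, Bform_quad, Bform_expand, horth w hwV, ← Bform_quad]
    ring
  have hmin : ∀ c' : Fin L → ℝ,
      ((∑ k : Fin L, c' k = 1) ∧ (∑ k : Fin L, (((k:ℕ):ℝ) + 1) * c' k = 0)) →
      quadForm n L θ σ cstar ≤ quadForm n L θ σ c' := by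
    intro c' hc'
    rw [hexp c' hc']
    have := hnonnegV _ (hdiffV c' hc')
    linarith
  refine ⟨cstar, ⟨hPcstar, hmin⟩, ?_⟩
  rintro c₁ ⟨hPc₁, hmin₁⟩
  have h1 : quadForm n L θ σ cstar ≤ quadForm n L θ σ c₁ := hmin c₁ hPc₁
  have h2 : quadForm n L θ σ c₁ ≤ quadForm n L θ σ cstar := hmin₁ cstar hPcstar
  have h3 := hexp c₁ hPc₁
  have hw0 : Bform n L θ σ (c₁ - cstar) (c₁ - cstar) = 0 := by linarith
  by_contra hne
  have hsub : c₁ - cstar ≠ 0 := fun hh => hne (sub_eq_zero.mp hh)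
  exact absurd hw0 (ne_of_gt (hposV _ (hdiffV c₁ hPc₁) hsub))


theorem Gmat_structure_and_unique_minimizer
    (n : ℕ) (hn : 2 ≤ n) (L : ℕ) (hL : 2 ≤ L) (κ₄ : ℝ) (hκ : 1 ≤ κ₄) :
    -- (i)
    (∀ θ : ℤ → ℝ, (∀ i : ℤ, θ (i + n) = θ i) → (∃ i j : ℤ, θ i ≠ θ j) →
      2 * L ≤ cycMinSeg n θ →
      (∀ k l : ℕ, 1 ≤ k → k ≤ L → 1 ≤ l → l ≤ L →
        (∑ i ∈ Finset.range n, (θ (i + 1) - θ (i + 1 + k + l)) ^ 2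
            = (k + l) * Wtv n θ) ∧
        Gmat n θ k l = 2 * max k l)) ∧
    -- in particular, the quadratic form depends only on the ratio `W(θ)/(nσ²)`
    (∀ θ₁ θ₂ : ℤ → ℝ, ∀ σ₁ σ₂ : ℝ,
      (∀ i : ℤ, θ₁ (i + n) = θ₁ i) → (∀ i : ℤ, θ₂ (i + n) = θ₂ i) →
      (∃ i j : ℤ, θ₁ i ≠ θ₁ j) → (∃ i j : ℤ, θ₂ i ≠ θ₂ j) →
      0 < σ₁ → 0 < σ₂ →
      2 * L ≤ cycMinSeg n θ₁ → 2 * L ≤ cycMinSeg n θ₂ →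
      Wtv n θ₁ / (n * σ₁ ^ 2) = Wtv n θ₂ / (n * σ₂ ^ 2) →
      ∀ c : Fin L → ℝ, quadForm n L θ₁ σ₁ c = quadForm n L θ₂ σ₂ c) ∧
    -- (ii) unique minimizer over the affine constraint set
    (∀ θ : ℤ → ℝ, (∀ i : ℤ, θ (i + n) = θ i) → (∃ i j : ℤ, θ i ≠ θ j) →
      L ≤ cycMinSeg n θ → ∀ σ : ℝ, 0 < σ →
      ∃! c : Fin L → ℝ,
        ((∑ k : Fin L, c k = 1) ∧ (∑ k : Fin L, ((k : ℕ) + 1 : ℝ) * c k = 0)) ∧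
        ∀ c' : Fin L → ℝ,
          ((∑ k : Fin L, c' k = 1) ∧ (∑ k : Fin L, ((k : ℕ) + 1 : ℝ) * c' k = 0)) →
          κ₄ - 1 + quadForm n L θ σ c ≤ κ₄ - 1 + quadForm n L θ σ c') := by
  have hn0 : 0 < n := by omega
  refine ⟨?_, ?_, ?_⟩
  · -- (i)
    intro θ hp hnc hseg k l hk1 hkL hl1 hlL
    have hkl : k + l ≤ cycMinSeg n θ := by omega
    constructor
    · exact part_i_S n θ hp k l hkl
    · rw [part_i_G n θ hn0 hp hnc k l hkl]
      rw [Nat.cast_max]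
  · -- ratio
    intro θ₁ θ₂ σ₁ σ₂ hp1 hp2 hnc1 hnc2 hσ1 hσ2 hseg1 hseg2 hratio c
    unfold quadForm
    apply Finset.sum_congr rfl; intro k _
    apply Finset.sum_congr rfl; intro l _
    have hkL := k.isLt
    have hlL := l.isLt
    rw [part_i_G n θ₁ hn0 hp1 hnc1 ((k:ℕ)+1) ((l:ℕ)+1) (by omega),
        part_i_G n θ₂ hn0 hp2 hnc2 ((k:ℕ)+1) ((l:ℕ)+1) (by omega), hratio]
  · -- (ii)
    intro θ hp hnc hseg σ hσ
    obtain ⟨c, ⟨hPc, hmin⟩, huniq⟩ :=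
      exists_unique_minimizer n L hn0 hL θ hp hnc hseg σ hσ
    refine ⟨c, ⟨hPc, fun c' hc' => by have := hmin c' hc'; linarith⟩, ?_⟩
    rintro c₁ ⟨hPc₁, hmin₁⟩
    exact huniq c₁ ⟨hPc₁, fun c' hc' => by have := hmin₁ c' hc'; linarith⟩
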